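/- Let D > 0, Δx > 0, and let m, ξ be real numbers such that 2·D·sin²(ξ/2) − (Δx²/2)·m > 0. Then for every real Δt ≥ 0, the von Neumann condition |1 − 4·(Δt·D/Δx²)·sin²(ξ/2) + Δt·m| ≤ 1 holds if and only if Δt ≤ Δx² / (2·D·sin²(ξ/2) − (Δx²/2)·m). -/
import Mathlib

/-- Von Neumann stability condition for the diffusive predator-prey scheme with
linearized reactive coefficient `m`. -/
theorem vonNeumann_condition_reactive (D Δx m ξ : ℝ) (hD : 0 < D) (hΔx : 0 < Δx)
    (hpos : 0 < 2 * D * Real.sin (ξ / 2) ^ 2 - Δx ^ 2 / 2 * m) :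
    ∀ Δt : ℝ, 0 ≤ Δt →
      (|1 - 4 * (Δt * D / Δx ^ 2) * Real.sin (ξ / 2) ^ 2 + Δt * m| ≤ 1 ↔
        Δt ≤ Δx ^ 2 / (2 * D * Real.sin (ξ / 2) ^ 2 - Δx ^ 2 / 2 * m)) := by
  intro Δt hΔt
  set s := Real.sin (ξ / 2) ^ 2 with hs
  have hx2 : (0:ℝ) < Δx ^ 2 := by positivity
  rw [abs_le, le_div_iff₀ hpos]
  have hkey : (4 * (Δt * D / Δx ^ 2) * s - Δt * m) * Δx ^ 2
      = 2 * (Δt * (2 * D * s - Δx ^ 2 / 2 * m)) := by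
    field_simp; ring
  constructor
  · rintro ⟨h1, h2⟩
    nlinarith [mul_le_mul_of_nonneg_right
      (show 4 * (Δt * D / Δx ^ 2) * s - Δt * m ≤ 2 by linarith) hx2.le]
  · intro h
    have h0 : 0 ≤ 4 * (Δt * D / Δx ^ 2) * s - Δt * m := by
      nlinarith [mul_nonneg hΔt hpos.le]
    have h2 : 4 * (Δt * D / Δx ^ 2) * s - Δt * m ≤ 2 := by nlinarith
    constructor <;> linarith
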